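/- If two finite simple graphs G and H are homomorphically equivalent (there exist homomorphisms G → H and H → G), then α°(G) = α°(H). -/

import Mathlib

open SimpleGraph

/-- A monotonic cycle with respect to an ordering relation `lt`:
a nonempty list of distinct vertices, strictly increasing w.r.t. `lt`,
and if it has length at least 2, consecutive vertices are adjacent and
the last vertex is adjacent to the first. -/
def MonoCycle {V : Type*} (G : SimpleGraph V) (lt : V → V → Prop) (l : List V) : Prop :=
  l ≠ [] ∧ l.Nodup ∧ l.Chain' lt ∧
    (2 ≤ l.length → l.Chain' G.Adj ∧
      ∀ a b, l.head? = some a → l.getLast? = some b → G.Adj b a)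

/-- The maximum length of a monotonic cycle for the ordering relation `lt`. -/
noncomputable def maxCycleLen {V : Type*} (G : SimpleGraph V) (lt : V → V → Prop) : ℕ :=
  sSup {m | ∃ l : List V, MonoCycle G lt l ∧ l.length = m}

/-- The circular altitude of a graph: the minimum over all linear orderings
(injections of the vertex set into `ℕ`) of the maximum length of a monotonic cycle. -/
noncomputable def circAlt {V : Type*} (G : SimpleGraph V) : ℕ :=
  sInf {n | ∃ f : V → ℕ, Function.Injective f ∧
    maxCycleLen G (fun a b => f a < f b) = n}

/-- Mapping a monotonic cycle through a homomorphism, given compatibility of orderings. -/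
lemma monoCycle_map {V W : Type*} {G : SimpleGraph V} {H : SimpleGraph W}
    (φ : G →g H) (f : V → ℕ) (g : W → ℕ)
    (key : ∀ a b : V, f a < f b → G.Adj a b → g (φ a) < g (φ b))
    {l : List V} (hl : MonoCycle G (fun a b => f a < f b) l) :
    MonoCycle H (fun a b => g a < g b) (l.map φ) := by
  obtain ⟨hne, hnd, hch, hcyc⟩ := hl
  by_cases h2 : 2 ≤ l.length
  · obtain ⟨hadj, hlast⟩ := hcyc h2
    have hchain : l.Chain' (fun a b => g (φ a) < g (φ b)) := by
      simp only [List.Chain', List.isChain_iff_getElem] at hch hadj ⊢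
      intro i hi
      exact key _ _ (hch i hi) (hadj i hi)
    have hchain' : List.Chain' (fun a b => g a < g b) (l.map φ) :=
      (List.isChain_map φ).2 hchain
    refine ⟨by simpa using hne, ?_, hchain', ?_⟩
    · -- Nodup of l.map φ
      have h1 : List.Chain' (· < ·) ((l.map φ).map g) := by
        simp only [List.Chain', List.isChain_map g]
        exact hchain'
      have h2 : ((l.map φ).map g).Pairwise (· < ·) := List.isChain_iff_pairwise.1 h1
      have h3 : ((l.map φ).map g).Nodup := h2.imp (fun h => ne_of_lt h)
      exact h3.of_map g
    · intro _
      refine ⟨(List.isChain_map φ).2 (hadj.imp (fun _ _ h => φ.map_adj h)), ?_⟩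
      intro a b ha hb
      rw [List.head?_map] at ha
      rw [List.getLast?_map] at hb
      obtain ⟨a₀, ha₀⟩ : ∃ a₀, l.head? = some a₀ := by
        cases l with
        | nil => exact absurd rfl hne
        | cons x xs => exact ⟨x, rfl⟩
      obtain ⟨b₀, hb₀⟩ : ∃ b₀, l.getLast? = some b₀ := by
        cases l with
        | nil => exact absurd rfl hne
        | cons x xs => exact ⟨_, List.getLast?_eq_getLast (by simp)⟩
      rw [ha₀] at ha
      rw [hb₀] at hb
      simp only [Option.map_some] at ha hb
      obtain rfl : φ a₀ = a := by injection ha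
      obtain rfl : φ b₀ = b := by injection hb
      exact φ.map_adj (hlast a₀ b₀ ha₀ hb₀)
  · obtain ⟨x, rfl⟩ : ∃ x, l = [x] := by
      cases l with
      | nil => exact absurd rfl hne
      | cons x xs =>
        cases xs with
        | nil => exact ⟨x, rfl⟩
        | cons y ys => simp at h2
    refine ⟨by simp, by simp, List.isChain_singleton _, fun h => by simp at h⟩

/-- Transporting an ordering through a homomorphism. -/
lemma maxCycleLen_le_of_hom {V W : Type*} [Finite V] [Finite W]
    (G : SimpleGraph V) (H : SimpleGraph W) (φ : G →g H)
    (g : W → ℕ) (hg : Function.Injective g) :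
    ∃ f : V → ℕ, Function.Injective f ∧
      maxCycleLen G (fun a b => f a < f b) ≤ maxCycleLen H (fun a b => g a < g b) := by
  classical
  have : Fintype V := Fintype.ofFinite V
  have : Fintype W := Fintype.ofFinite W
  set N : ℕ := Fintype.card V with hN
  set ι : V → ℕ := fun v => ((Fintype.equivFin V) v : ℕ) with hι
  have hιlt : ∀ v, ι v < N := fun v => ((Fintype.equivFin V) v).isLt
  have hιinj : Function.Injective ι := fun a b h => by
    apply (Fintype.equivFin V).injective
    exact Fin.ext h
  set f : V → ℕ := fun v => g (φ v) * N + ι v with hf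
  have hmono : ∀ a b : V, g (φ a) < g (φ b) → f a < f b := by
    intro a b h
    have h1 : f a < (g (φ a) + 1) * N := by
      simp only [hf, add_mul, one_mul]
      exact Nat.add_lt_add_left (hιlt a) _
    have h2 : (g (φ a) + 1) * N ≤ g (φ b) * N := Nat.mul_le_mul_right _ h
    have h3 : g (φ b) * N ≤ f b := Nat.le_add_right _ _
    omega
  have hle : ∀ a b : V, f a < f b → g (φ a) ≤ g (φ b) := by
    intro a b h
    by_contra hc
    push_neg at hc
    exact absurd (hmono b a hc) (by omega)
  have hfinj : Function.Injective f := by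
    intro a b h
    rcases lt_trichotomy (g (φ a)) (g (φ b)) with h1 | h1 | h1
    · exact absurd (hmono a b h1) (by omega)
    · apply hιinj
      simp only [hf] at h
      rw [h1] at h
      omega
    · exact absurd (hmono b a h1) (by omega)
  have key : ∀ a b : V, f a < f b → G.Adj a b → g (φ a) < g (φ b) := by
    intro a b hlt hadj
    refine lt_of_le_of_ne (hle a b hlt) ?_
    intro heq
    exact (φ.map_adj hadj).ne (hg heq)
  refine ⟨f, hfinj, ?_⟩
  apply csSup_le'
  rintro m ⟨l, hl, rfl⟩
  have hmem : (l.map φ).length ∈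
      {m | ∃ l' : List W, MonoCycle H (fun a b => g a < g b) l' ∧ l'.length = m} :=
    ⟨l.map φ, monoCycle_map φ f g key hl, rfl⟩
  have hbdd : BddAbove {m | ∃ l' : List W, MonoCycle H (fun a b => g a < g b) l' ∧ l'.length = m} := by
    refine ⟨Fintype.card W, ?_⟩
    rintro m ⟨l', hl', rfl⟩
    exact hl'.2.1.length_le_card
  calc l.length = (l.map φ).length := (List.length_map φ).symm
    _ ≤ _ := le_csSup hbdd hmem

lemma circAlt_le_of_hom {V W : Type*} [Finite V] [Finite W]
    (G : SimpleGraph V) (H : SimpleGraph W) (φ : G →g H) :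
    circAlt G ≤ circAlt H := by
  have hne : {n | ∃ g : W → ℕ, Function.Injective g ∧
      maxCycleLen H (fun a b => g a < g b) = n}.Nonempty := by
    obtain ⟨g, hg⟩ := exists_injective_nat W
    exact ⟨_, g, hg, rfl⟩
  obtain ⟨g, hg, hgval⟩ := Nat.sInf_mem hne
  obtain ⟨f, hf, hle⟩ := maxCycleLen_le_of_hom G H φ g hg
  calc circAlt G ≤ maxCycleLen G (fun a b => f a < f b) := Nat.sInf_le ⟨f, hf, rfl⟩
    _ ≤ maxCycleLen H (fun a b => g a < g b) := hle
    _ = circAlt H := hgval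

/-- Homomorphically equivalent graphs have the same circular altitude. -/
theorem circAlt_eq_of_homEquiv {V W : Type*} [Finite V] [Finite W]
    (G : SimpleGraph V) (H : SimpleGraph W)
    (h₁ : Nonempty (G →g H)) (h₂ : Nonempty (H →g G)) :
    circAlt G = circAlt H := by
  obtain ⟨φ⟩ := h₁
  obtain ⟨ψ⟩ := h₂
  exact le_antisymm (circAlt_le_of_hom G H φ) (circAlt_le_of_hom H G ψ)
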